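/- Let X be a complex Banach space and Y a closed subspace of X which is an M-ideal in X. If there exists a contractive linear projection from Y** onto i_Y(Y), then Y is an M-summand in X, i.e., Y is the range of an M-projection on X. -/

import Mathlib

open NormedSpace

/-- The topological dual of a seminormed space `E` (as `NormedSpace.Dual` was defined in Mathlib). -/
abbrev NormedSpace.Dual (𝕜 : Type*) [NontriviallyNormedField 𝕜] (E : Type*) [SeminormedAddCommGroup E]
    [NormedSpace 𝕜 E] : Type _ :=
  E →L[𝕜] 𝕜

noncomputable section

set_option maxHeartbeats 1000000

/-- The transpose (dual map) of a continuous linear map between (semi)normed spaces: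
`ctranspose f` sends a functional `g` to `g ∘ f`. -/
def ctranspose {E F : Type*} [SeminormedAddCommGroup E] [NormedSpace ℂ E]
    [SeminormedAddCommGroup F] [NormedSpace ℂ F] (f : E →L[ℂ] F) :
    Dual ℂ F →L[ℂ] Dual ℂ E :=
  (ContinuousLinearMap.compL ℂ E F ℂ).flip f

/-- A bounded linear projection `P` is an L-projection if `‖z‖ = ‖P z‖ + ‖z - P z‖`
for all `z`. -/
def IsLProjection {Z : Type*} [SeminormedAddCommGroup Z] [NormedSpace ℂ Z]
    (P : Z →L[ℂ] Z) : Prop :=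
  (∀ z, P (P z) = P z) ∧ ∀ z, ‖z‖ = ‖P z‖ + ‖z - P z‖

/-- A bounded linear projection `P` is an M-projection if `‖z‖ = max (‖P z‖, ‖z - P z‖)`
for all `z`. -/
def IsMProjection {Z : Type*} [SeminormedAddCommGroup Z] [NormedSpace ℂ Z]
    (P : Z →L[ℂ] Z) : Prop :=
  (∀ z, P (P z) = P z) ∧ ∀ z, ‖z‖ = max ‖P z‖ ‖z - P z‖

/-- If `Y` is an M-ideal in a complex Banach space `X` and there is a contractive
linear projection from `Y**` onto `i_Y(Y)`, then `Y` is an M-summand in `X`. -/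
theorem mIdeal_contractively_complemented_in_bidual_is_mSummand
    (X : Type*) [NormedAddCommGroup X] [NormedSpace ℂ X] [CompleteSpace X]
    (Y : Subspace ℂ X) (hY : IsClosed (Y : Set X))
    (hMideal : ∃ P : Dual ℂ X →L[ℂ] Dual ℂ X, IsLProjection P ∧
      Set.range P = {f : Dual ℂ X | ∀ y ∈ Y, f y = 0})
    (hproj : ∃ Q : Dual ℂ (Dual ℂ Y) →L[ℂ] Dual ℂ (Dual ℂ Y), ‖Q‖ ≤ 1 ∧
      (∀ Ψ, Q (Q Ψ) = Q Ψ) ∧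
      Set.range Q = Set.range (inclusionInDoubleDual ℂ Y)) :
    ∃ R : X →L[ℂ] X, IsMProjection R ∧ Set.range R = (Y : Set X) := by
  obtain ⟨E, hEL, hErange⟩ := hMideal
  obtain ⟨hEidem, hEnorm⟩ := hEL
  obtain ⟨Q, hQnorm, hQidem, hQrange⟩ := hproj
  -- basic facts about E
  have hEY : ∀ (f : Dual ℂ X) (y : X), y ∈ Y → E f y = 0 := by
    intro f y hy
    have h1 : E f ∈ Set.range E := ⟨f, rfl⟩
    rw [hErange] at h1
    exact h1 y hy
  have hEfix : ∀ f : Dual ℂ X, (∀ y ∈ Y, f y = 0) → E f = f := by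
    intro f hf
    have h1 : f ∈ Set.range E := by rw [hErange]; exact hf
    obtain ⟨g, hg⟩ := h1
    rw [← hg, hEidem]
  have hEcontr : ∀ f : Dual ℂ X, ‖E f‖ ≤ ‖f‖ := by
    intro f
    have := hEnorm f
    have := norm_nonneg (f - E f)
    linarith
  -- the inclusion map
  set ι : Y →L[ℂ] X := Y.subtypeL with hι
  have hιapp : ∀ y : Y, ι y = (y : X) := fun y => rfl
  have hcompι : ∀ f : Dual ℂ X, ‖f.comp ι‖ ≤ ‖f‖ := by
    intro f
    refine ContinuousLinearMap.opNorm_le_bound _ (norm_nonneg f) (fun y => ?_)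
    calc ‖f (ι y)‖ ≤ ‖f‖ * ‖ι y‖ := f.le_opNorm _
    _ = ‖f‖ * ‖y‖ := rfl
  -- Key lemma A : functionals killed by E have norm equal to restriction norm
  have lemA : ∀ f : Dual ℂ X, E f = 0 → ‖f‖ ≤ ‖f.comp ι‖ := by
    intro f hf
    obtain ⟨h, hext, hnorm⟩ := exists_extension_norm_eq Y (f.comp ι)
    have hann : ∀ y ∈ Y, (f - h) y = 0 := by
      intro y hy
      have h1 := hext ⟨y, hy⟩
      simp only [ContinuousLinearMap.comp_apply, hι, Submodule.subtypeL_apply] at h1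
      simp only [ContinuousLinearMap.sub_apply, h1, sub_self]
    have h1 : E (f - h) = f - h := hEfix _ hann
    rw [map_sub, hf, zero_sub, neg_eq_iff_eq_neg] at h1
    -- h1 : E h = -(f - h), so f = h - E h
    have h2 : f = h - E h := by rw [h1]; abel
    calc ‖f‖ = ‖h - E h‖ := by rw [h2]
    _ ≤ ‖h‖ := by have := hEnorm h; have := norm_nonneg (E h); linarith
    _ = ‖f.comp ι‖ := hnorm
  -- extension operator
  have hHB : ∀ g : Dual ℂ Y, ∃ f : Dual ℂ X, (∀ y : Y, f y = g y) ∧ ‖f‖ = ‖g‖ :=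
    fun g => exists_extension_norm_eq Y g
  set ext : Dual ℂ Y → Dual ℂ X := fun g => (hHB g).choose with hextdef
  have hextP : ∀ g : Dual ℂ Y, (∀ y : Y, ext g y = g y) ∧ ‖ext g‖ = ‖g‖ :=
    fun g => (hHB g).choose_spec
  set sfun : Dual ℂ Y → Dual ℂ X := fun g => ext g - E (ext g) with hsfun
  have hσE : ∀ g, E (sfun g) = 0 := by
    intro g; simp only [hsfun, map_sub, hEidem, sub_self]
  have hσext : ∀ (g : Dual ℂ Y) (y : Y), sfun g (y : X) = g y := by
    intro g y
    simp only [hsfun, ContinuousLinearMap.sub_apply]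
    rw [hEY _ _ y.2, sub_zero, (hextP g).1 y]
  -- well-definedness
  have hσwd : ∀ (g : Dual ℂ Y) (f : Dual ℂ X), (∀ y : Y, f y = g y) → f - E f = sfun g := by
    intro g f hf
    have hann : ∀ y ∈ Y, (f - ext g) y = 0 := by
      intro y hy
      simp only [ContinuousLinearMap.sub_apply]
      rw [hf ⟨y, hy⟩, (hextP g).1 ⟨y, hy⟩, sub_self]
    have h1 : E (f - ext g) = f - ext g := hEfix _ hann
    rw [map_sub] at h1
    have : f - E f = ext g - E (ext g) := by
      rw [sub_eq_sub_iff_sub_eq_sub]; exact h1.symm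
    exact this
  have hσnorm : ∀ g, ‖sfun g‖ ≤ ‖g‖ := by
    intro g
    calc ‖sfun g‖ = ‖ext g - E (ext g)‖ := rfl
    _ ≤ ‖ext g‖ := by have := hEnorm (ext g); have := norm_nonneg (E (ext g)); linarith
    _ = ‖g‖ := (hextP g).2
  -- σ as continuous linear map
  set σ : Dual ℂ Y →L[ℂ] Dual ℂ X := LinearMap.mkContinuous
    { toFun := sfun
      map_add' := by
        intro g₁ g₂
        show sfun (g₁ + g₂) = sfun g₁ + sfun g₂
        have h1 : ∀ y : Y, (ext g₁ + ext g₂) y = (g₁ + g₂) y := by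
          intro y
          simp only [ContinuousLinearMap.add_apply, (hextP g₁).1 y, (hextP g₂).1 y]
        have := hσwd (g₁ + g₂) (ext g₁ + ext g₂) h1
        rw [← this, map_add]
        simp only [hsfun]; abel
      map_smul' := by
        intro c g
        show sfun (c • g) = c • sfun g
        have h1 : ∀ y : Y, (c • ext g) y = (c • g) y := by
          intro y
          simp only [ContinuousLinearMap.smul_apply, (hextP g).1 y]
        have := hσwd (c • g) (c • ext g) h1
        rw [← this, map_smul]
        simp only [hsfun, RingHom.id_apply, smul_sub] }
    1 (fun g => by simpa using hσnorm g) with hσdef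
  have hσapp : ∀ g, σ g = sfun g := fun g => rfl
  -- T : X → Y**
  set T : X → Dual ℂ (Dual ℂ Y) := fun x => (inclusionInDoubleDual ℂ X x).comp σ with hTdef
  have hTapp : ∀ (x : X) (g : Dual ℂ Y), T x g = sfun g x := by
    intro x g; simp only [hTdef, ContinuousLinearMap.comp_apply, dual_def, hσapp]
  have hTadd : ∀ x x', T (x + x') = T x + T x' := by
    intro x x'; ext g; simp [hTapp, ContinuousLinearMap.add_apply, hTdef]
  have hTsmul : ∀ (c : ℂ) x, T (c • x) = c • T x := by
    intro c x; ext g; simp [hTapp, hTdef]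
  have hTnorm : ∀ x, ‖T x‖ ≤ ‖x‖ := by
    intro x
    refine ContinuousLinearMap.opNorm_le_bound _ (norm_nonneg x) (fun g => ?_)
    rw [hTapp]
    calc ‖sfun g x‖ ≤ ‖sfun g‖ * ‖x‖ := (sfun g).le_opNorm x
    _ ≤ ‖g‖ * ‖x‖ := by
        have := hσnorm g
        exact mul_le_mul_of_nonneg_right this (norm_nonneg x)
    _ = ‖x‖ * ‖g‖ := mul_comm _ _
  -- the map into Y
  have hQT : ∀ x, Q (T x) ∈ Set.range (inclusionInDoubleDual ℂ Y) := by
    intro x; rw [← hQrange]; exact ⟨T x, rfl⟩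
  set rf : X → Y := fun x => (hQT x).choose with hrfdef
  have hrf : ∀ x, inclusionInDoubleDual ℂ Y (rf x) = Q (T x) := fun x => (hQT x).choose_spec
  have hIinj : Function.Injective (inclusionInDoubleDual ℂ Y) :=
    (inclusionInDoubleDualLi ℂ (E := Y)).injective
  have hInorm : ∀ y : Y, ‖inclusionInDoubleDual ℂ Y y‖ = ‖y‖ :=
    fun y => (inclusionInDoubleDualLi ℂ (E := Y)).norm_map y
  have hrfadd : ∀ x x', rf (x + x') = rf x + rf x' := by
    intro x x'
    apply hIinj
    rw [map_add, hrf, hrf, hrf, hTadd, map_add]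
  have hrfsmul : ∀ (c : ℂ) x, rf (c • x) = c • rf x := by
    intro c x
    apply hIinj
    rw [map_smul, hrf, hrf, hTsmul, map_smul]
  have hrfnorm : ∀ x, ‖rf x‖ ≤ ‖x‖ := by
    intro x
    rw [← hInorm, hrf]
    calc ‖Q (T x)‖ ≤ ‖Q‖ * ‖T x‖ := Q.le_opNorm _
    _ ≤ 1 * ‖x‖ := mul_le_mul hQnorm (hTnorm x) (norm_nonneg _) zero_le_one
    _ = ‖x‖ := one_mul _
  set R₀ : X →L[ℂ] Y := LinearMap.mkContinuous
    { toFun := rf, map_add' := hrfadd, map_smul' := fun c x => hrfsmul c x } 1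
    (fun x => by simpa using hrfnorm x) with hR₀def
  set R : X →L[ℂ] X := ι.comp R₀ with hRdef
  have hRapp : ∀ x, R x = ((rf x : Y) : X) := fun x => rfl
  have hRmem : ∀ x, R x ∈ Y := fun x => (rf x).2
  have hRnorm : ∀ x, ‖R x‖ ≤ ‖x‖ := by
    intro x; rw [hRapp]
    calc ‖((rf x : Y) : X)‖ = ‖rf x‖ := rfl
    _ ≤ ‖x‖ := hrfnorm x
  -- R fixes Y
  have hTY : ∀ y : Y, T (y : X) = inclusionInDoubleDual ℂ Y y := by
    intro y; ext g
    rw [hTapp, hσext, dual_def]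
  have hRfix : ∀ y : Y, R (y : X) = (y : X) := by
    intro y
    have h1 : T (y : X) ∈ Set.range Q := by
      rw [hQrange]; exact ⟨y, (hTY y).symm⟩
    obtain ⟨w, hw⟩ := h1
    have h2 : Q (T (y : X)) = T (y : X) := by rw [← hw, hQidem]
    have h3 : inclusionInDoubleDual ℂ Y (rf (y : X)) = inclusionInDoubleDual ℂ Y y := by
      rw [hrf, h2, hTY]
    rw [hRapp]
    exact congrArg (Subtype.val) (hIinj h3)
  have hRidem : ∀ x, R (R x) = R x := by
    intro x; rw [hRapp x]; exact hRfix (rf x)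
  -- KEY : for f with E f = 0, f ∘ R = f
  have key : ∀ f : Dual ℂ X, E f = 0 → ∀ x, f (R x) = f x := by
    intro f hf
    set h : Dual ℂ X := f.comp R with hhdef
    have hhY : ∀ y : Y, h (y : X) = f (y : X) := by
      intro y
      simp only [hhdef, ContinuousLinearMap.comp_apply, hRfix y]
    have hhnorm : ‖h‖ ≤ ‖f‖ := by
      refine ContinuousLinearMap.opNorm_le_bound _ (norm_nonneg f) (fun x => ?_)
      calc ‖f (R x)‖ ≤ ‖f‖ * ‖R x‖ := f.le_opNorm _
      _ ≤ ‖f‖ * ‖x‖ := mul_le_mul_of_nonneg_left (hRnorm x) (norm_nonneg f)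
    have hEhι : (E h).comp ι = 0 := by
      ext y; exact hEY h _ y.2
    have hEhEzero : E (h - E h) = 0 := by rw [map_sub, hEidem, sub_self]
    have hhι : h.comp ι = f.comp ι := by
      ext y; exact hhY y
    have hcomp : (h - E h).comp ι = h.comp ι := by
      rw [ContinuousLinearMap.sub_comp, hEhι, sub_zero]
    have hchain : ‖f‖ ≤ ‖h - E h‖ := by
      calc ‖f‖ ≤ ‖f.comp ι‖ := lemA f hf
      _ = ‖(h - E h).comp ι‖ := by rw [hcomp, hhι]
      _ ≤ ‖h - E h‖ := hcompι _
    have hEh : E h = 0 := by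
      have h1 := hEnorm h
      have h2 : ‖E h‖ ≤ 0 := by linarith
      exact norm_le_zero_iff.mp h2
    have hEhf : E (h - f) = 0 := by rw [map_sub, hEh, hf, sub_self]
    have hhfι : (h - f).comp ι = 0 := by
      ext y
      simp only [ContinuousLinearMap.comp_apply, ContinuousLinearMap.sub_apply,
        ContinuousLinearMap.zero_apply, hι, Submodule.subtypeL_apply]
      rw [hhY y]; exact sub_self _
    have : ‖h - f‖ ≤ 0 := by
      have h0 := lemA _ hEhf
      rw [hhfι] at h0
      rwa [ContinuousLinearMap.opNorm_zero] at h0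
    have hfh : h = f := by
      have := norm_le_zero_iff.mp this
      rwa [sub_eq_zero] at this
    intro x
    calc f (R x) = h x := (ContinuousLinearMap.comp_apply f R x).symm
    _ = f x := by rw [hfh]
  -- conclude
  refine ⟨R, ⟨hRidem, ?_⟩, ?_⟩
  · intro x
    have hfR : ∀ f : Dual ℂ X, f (R x) = (f - E f) x := by
      intro f
      have hEz : E (f - E f) = 0 := by rw [map_sub, hEidem, sub_self]
      have h1 := key (f - E f) hEz x
      have h2 : E f (R x) = 0 := hEY _ _ (hRmem x)
      calc f (R x) = (f - E f) (R x) + E f (R x) := by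
            simp [ContinuousLinearMap.sub_apply]
      _ = (f - E f) x := by rw [h2, add_zero, h1]
    have hxR : ∀ f : Dual ℂ X, f (x - R x) = E f x := by
      intro f
      have := hfR f
      simp only [ContinuousLinearMap.sub_apply] at this
      simp only [map_sub]
      rw [this]; ring
    have hle1 : ‖R x‖ ≤ ‖x‖ := hRnorm x
    have hle2 : ‖x - R x‖ ≤ ‖x‖ := by
      refine norm_le_dual_bound ℂ _ (norm_nonneg x) (fun f => ?_)
      rw [hxR f, mul_comm]
      calc ‖E f x‖ ≤ ‖E f‖ * ‖x‖ := (E f).le_opNorm x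
      _ ≤ ‖f‖ * ‖x‖ := mul_le_mul_of_nonneg_right (hEcontr f) (norm_nonneg x)
    have hge : ‖x‖ ≤ max ‖R x‖ ‖x - R x‖ := by
      refine norm_le_dual_bound ℂ _ (le_max_of_le_left (norm_nonneg _)) (fun f => ?_)
      have hsplit : f x = (f - E f) (R x) + E f (x - R x) := by
        have hEz : E (f - E f) = 0 := by rw [map_sub, hEidem, sub_self]
        have h3 : (f - E f) (R x) = (f - E f) x := key _ hEz x
        have h4 : E f (R x) = 0 := hEY _ _ (hRmem x)
        rw [h3]
        simp only [ContinuousLinearMap.sub_apply, map_sub, h4]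
        ring
      rw [hsplit]
      have hb : ‖(f - E f) (R x) + E f (x - R x)‖ ≤
          ‖f - E f‖ * ‖R x‖ + ‖E f‖ * ‖x - R x‖ := by
        refine le_trans (norm_add_le _ _) (add_le_add ((f - E f).le_opNorm _) ((E f).le_opNorm _))
      set M := max ‖R x‖ ‖x - R x‖ with hM
      calc ‖(f - E f) (R x) + E f (x - R x)‖ ≤ ‖f - E f‖ * ‖R x‖ + ‖E f‖ * ‖x - R x‖ := hb
      _ ≤ ‖f - E f‖ * M + ‖E f‖ * M := by
          refine add_le_add (mul_le_mul_of_nonneg_left (le_max_left _ _) (norm_nonneg _))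
            (mul_le_mul_of_nonneg_left (le_max_right _ _) (norm_nonneg _))
      _ = (‖E f‖ + ‖f - E f‖) * M := by ring
      _ = ‖f‖ * M := by rw [← hEnorm f]
      _ = M * ‖f‖ := mul_comm _ _
    exact le_antisymm hge (max_le hle1 hle2)
  · ext x
    constructor
    · rintro ⟨w, rfl⟩; exact hRmem w
    · intro hx; exact ⟨x, hRfix ⟨x, hx⟩⟩
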